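/- The only square-free integers N > 1 such that 24 / Π_{p | N}(1 − p) is an integer are N ∈ {2, 3, 5, 6, 7, 10, 13, 14, 15, 21, 26, 30, 35, 39, 42, 70, 78}, where the product is over primes p dividing N. -/

import Mathlib

private lemma small_prime_mem : ∀ p ≤ 25, p.Prime → p - 1 ∣ 24 →
    p ∈ ({2, 3, 5, 7, 13} : Finset ℕ) := by decide

private lemma target_dvd : ∀ n ∈ ({2, 3, 5, 6, 7, 10, 13, 14, 15, 21, 26, 30, 35, 39, 42, 70,
    78} : Finset ℕ), n ∣ 2730 := by decide

private lemma main_subsets : ∀ s ∈ ({2, 3, 5, 7, 13} : Finset ℕ).powerset, 1 < ∏ p ∈ s, p →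
    ((∏ p ∈ s, (p - 1)) ∣ 24 ↔
      (∏ p ∈ s, p) ∈ ({2, 3, 5, 6, 7, 10, 13, 14, 15, 21, 26, 30, 35, 39, 42, 70,
        78} : Finset ℕ)) := by decide

/-- The only square-free `N > 1` such that `24 / ∏_{p ∣ N} (1 − p)` is an integer are
`N ∈ {2, 3, 5, 6, 7, 10, 13, 14, 15, 21, 26, 30, 35, 39, 42, 70, 78}`. -/
theorem squarefree_level_integral_iff (N : ℕ) (hN : 1 < N) (hsf : Squarefree N) :
    (∃ z : ℤ, (24 : ℚ) / (∏ p ∈ N.primeFactors, (1 - (p : ℚ))) = z) ↔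
      N ∈ ({2, 3, 5, 6, 7, 10, 13, 14, 15, 21, 26, 30, 35, 39, 42, 70, 78} : Finset ℕ) := by
  set s := N.primeFactors with hs_def
  have hsp : ∀ p ∈ s, p.Prime := fun p hp => Nat.prime_of_mem_primeFactors hp
  have hprodN : ∏ p ∈ s, p = N := Nat.prod_primeFactors_of_squarefree hsf
  set P : ℕ := ∏ p ∈ s, (p - 1) with hP_def
  have hP1 : 1 ≤ P := Finset.one_le_prod' fun p hp => by
    have := (hsp p hp).two_le; omega
  have hP0 : ((P : ℚ)) ≠ 0 := by positivity
  have hq : (∏ p ∈ s, (1 - (p : ℚ))) = (-1) ^ s.card * ((P : ℕ) : ℚ) := by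
    have h1 : ∀ p ∈ s, (1 - (p : ℚ)) = (-1) * (((p - 1 : ℕ)) : ℚ) := fun p hp => by
      have h2 := (hsp p hp).two_le
      rw [Nat.cast_sub (by omega : 1 ≤ p)]
      push_cast; ring
    rw [Finset.prod_congr rfl h1, Finset.prod_mul_distrib, Finset.prod_const, hP_def,
      Nat.cast_prod]
  have hsq : ((-1 : ℚ) ^ s.card) * ((-1 : ℚ) ^ s.card) = 1 := by
    rw [← pow_add, ← two_mul, pow_mul]; norm_num
  have key : (∃ z : ℤ, (24 : ℚ) / (∏ p ∈ s, (1 - (p : ℚ))) = z) ↔ P ∣ 24 := by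
    constructor
    · rintro ⟨z, hz⟩
      rw [hq] at hz
      have hne : ((-1 : ℚ) ^ s.card * (P : ℚ)) ≠ 0 := by
        apply mul_ne_zero _ hP0
        exact pow_ne_zero _ (by norm_num)
      rw [div_eq_iff hne] at hz
      have hz2 : (24 : ℚ) = (z * (-1) ^ s.card) * (P : ℚ) := by
        rw [hz]; ring
      have hz3 : (24 : ℤ) = (z * (-1) ^ s.card) * (P : ℤ) := by exact_mod_cast hz2
      have : (P : ℤ) ∣ (24 : ℤ) := Dvd.intro_left _ hz3.symm
      exact_mod_cast this
    · rintro ⟨k, hk⟩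
      refine ⟨(-1) ^ s.card * (k : ℤ), ?_⟩
      rw [hq, div_eq_iff (by
        apply mul_ne_zero _ hP0
        exact pow_ne_zero _ (by norm_num))]
      have h24 : (24 : ℚ) = (P : ℚ) * k := by exact_mod_cast hk
      rw [h24]
      push_cast
      calc ((P : ℚ) * k : ℚ) = ((-1) ^ s.card * (-1) ^ s.card) * (P * k) := by rw [hsq]; ring
        _ = ((-1) ^ s.card * k) * ((-1) ^ s.card * P) := by ring
  rw [key]
  constructor
  · intro hP24
    have hsub : s ⊆ ({2, 3, 5, 7, 13} : Finset ℕ) := fun p hp => by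
      have hd : p - 1 ∣ P := Finset.dvd_prod_of_mem _ hp
      have h24 : p - 1 ∣ 24 := hd.trans hP24
      have hle : p ≤ 25 := by
        have := Nat.le_of_dvd (by norm_num) h24
        have := (hsp p hp).two_le
        omega
      exact small_prime_mem p hle (hsp p hp) h24
    have := main_subsets s (Finset.mem_powerset.2 hsub) (by rw [hprodN]; exact hN)
    rw [hprodN] at this
    exact this.1 hP24
  · intro hmem
    have hdvd : N ∣ 2730 := target_dvd N hmem
    have hsub : s ⊆ ({2, 3, 5, 7, 13} : Finset ℕ) := fun p hp => by
      have hp' := hsp p hp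
      have hpd : p ∣ 2 * (3 * (5 * (7 * 13))) := by
        have : p ∣ N := Nat.dvd_of_mem_primeFactors hp
        calc p ∣ N := this
          _ ∣ 2730 := hdvd
          _ = 2 * (3 * (5 * (7 * 13))) := by norm_num
      have h2 : p.Prime → p ∣ 13 → p = 13 := fun h hd =>
        (Nat.prime_dvd_prime_iff_eq h (by norm_num)).mp hd
      rcases hp'.dvd_mul.mp hpd with h | h
      · simp [Nat.eq_of_dvd_of_lt_two_mul, (Nat.prime_dvd_prime_iff_eq hp'
          (by norm_num : Nat.Prime 2)).mp h]
      rcases hp'.dvd_mul.mp h with h | h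
      · simp [(Nat.prime_dvd_prime_iff_eq hp' (by norm_num : Nat.Prime 3)).mp h]
      rcases hp'.dvd_mul.mp h with h | h
      · simp [(Nat.prime_dvd_prime_iff_eq hp' (by norm_num : Nat.Prime 5)).mp h]
      rcases hp'.dvd_mul.mp h with h | h
      · simp [(Nat.prime_dvd_prime_iff_eq hp' (by norm_num : Nat.Prime 7)).mp h]
      · simp [(Nat.prime_dvd_prime_iff_eq hp' (by norm_num : Nat.Prime 13)).mp h]
    have := main_subsets s (Finset.mem_powerset.2 hsub) (by rw [hprodN]; exact hN)
    rw [hprodN] at this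
    exact this.2 hmem
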